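/- Let g(γ) = −N K_S log γ + g_1(γ), where g_1 is the piecewise function from the second-order compressed likelihood: g_1(γ) = K Σ_{i=1}^N log(γK/(γγ_i + λ̂_i(γ))) + K_S Σ_{i=1}^N log λ̂_i(γ) with λ̂_i(γ) = max(K_S γ γ_i/K_P, 1), where γ_1 ≥ … ≥ γ_{K_P} > 0, γ_i = 0 for i > K_P, r < K_P ≤ N, K = K_P + K_S, K_S ≥ N, and at most r of the λ̂_i exceed 1 (λ̂_i(γ) = 1 for i > r). If (K_P − r)K_S > (N − K_P)K_P, then g(γ) → −∞ both as γ → 0⁺ and as γ → +∞, so g attains its global maximum at a stationary point in (0, ∞). -/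

import Mathlib

open Finset Filter

/-- Theorem 4 of the paper (existence of the maximizer): the compressed log-likelihood
`g(γ) = −N K_S log γ + K Σ_{i=1}^N log(γK/(γγ_i + λ̂_i(γ))) + K_S Σ_{i=1}^N log λ̂_i(γ)`,
with `λ̂_i(γ) = max(K_S γ γ_i/K_P, 1)` for `i ≤ r` and `λ̂_i(γ) = 1` for `i > r`,
tends to `−∞` as `γ → 0⁺` and as `γ → +∞` when `(K_P − r)K_S > (N − K_P)K_P`, so it
attains its global maximum on `(0, ∞)`. -/
theorem stmt16 (N K_P K_S r K : ℕ) (hK : K = K_P + K_S) (hr : 0 < r)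
    (hrKP : r < K_P) (hKPN : K_P ≤ N) (hKS : N ≤ K_S)
    (gam : ℕ → ℝ) (hanti : AntitoneOn gam (Set.Icc 1 N)) (hnn : ∀ i, 0 ≤ gam i)
    (hpos : ∀ i, 1 ≤ i → i ≤ K_P → 0 < gam i) (hzero : ∀ i, K_P < i → gam i = 0)
    (hcond : ((N : ℝ) - K_P) * K_P < ((K_P : ℝ) - r) * K_S)
    (lam : ℕ → ℝ → ℝ)
    (hlam : ∀ i γ, lam i γ = if i ≤ r then max ((K_S : ℝ) * γ * gam i / K_P) 1 else 1)
    (g : ℝ → ℝ)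
    (hg : ∀ γ : ℝ, 0 < γ →
      g γ = -((N : ℝ) * K_S) * Real.log γ +
        (K : ℝ) * ∑ i ∈ Finset.Icc 1 N, Real.log (γ * K / (γ * gam i + lam i γ)) +
        (K_S : ℝ) * ∑ i ∈ Finset.Icc 1 N, Real.log (lam i γ)) :
    Tendsto g (nhdsWithin 0 (Set.Ioi 0)) atBot ∧
    Tendsto g atTop atBot ∧
    ∃ γ₀ : ℝ, 0 < γ₀ ∧ ∀ γ : ℝ, 0 < γ → g γ ≤ g γ₀ := by
  have hP : (0:ℝ) < K_P := by exact_mod_cast Nat.pos_of_ne_zero (by omega)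
  have hS : (0:ℝ) < K_S := by exact_mod_cast Nat.pos_of_ne_zero (by omega)
  have hKr : (0:ℝ) < K := by exact_mod_cast Nat.pos_of_ne_zero (by omega)
  have hN1 : 1 ≤ N := by omega
  have hlam1 : ∀ i γ, 1 ≤ lam i γ := by
    intro i γ; rw [hlam]; split
    · exact le_max_right _ _
    · exact le_refl 1
  have hden : ∀ i γ, 0 < γ → 0 < γ * gam i + lam i γ := by
    intro i γ hγ
    have := hlam1 i γ
    have := mul_nonneg hγ.le (hnn i)
    linarith
  have hlamcont : ∀ i, Continuous (lam i) := by
    intro i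
    have : lam i = fun γ => if i ≤ r then max ((K_S : ℝ) * γ * gam i / K_P) 1 else 1 :=
      funext fun γ => hlam i γ
    rw [this]
    by_cases h : i ≤ r
    · simp only [h, if_true]
      exact (((continuous_const.mul continuous_id).mul continuous_const).div_const _).max
        continuous_const
    · simp only [h, if_false]; exact continuous_const
  -- continuity of g on (0, ∞)
  have hgc : ContinuousOn g (Set.Ioi (0:ℝ)) := by
    have h1 : ContinuousOn (fun γ : ℝ => -((N : ℝ) * K_S) * Real.log γ +
        (K : ℝ) * ∑ i ∈ Finset.Icc 1 N, Real.log (γ * K / (γ * gam i + lam i γ)) +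
        (K_S : ℝ) * ∑ i ∈ Finset.Icc 1 N, Real.log (lam i γ)) (Set.Ioi 0) := by
      apply ContinuousOn.add
      apply ContinuousOn.add
      · exact continuousOn_const.mul
          (ContinuousOn.log continuousOn_id fun x hx => ne_of_gt hx)
      · refine continuousOn_const.mul (continuousOn_finset_sum _ fun i _ => ?_)
        refine ContinuousOn.log ?_ ?_
        · refine ContinuousOn.div ((continuous_id.mul continuous_const).continuousOn)
            (((continuous_id.mul continuous_const).add (hlamcont i)).continuousOn) ?_
          intro x hx; exact (hden i x hx).ne'
        · intro x hx
          exact (div_pos (mul_pos hx hKr) (hden i x hx)).ne'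
      · refine continuousOn_const.mul (continuousOn_finset_sum _ fun i _ => ?_)
        refine ContinuousOn.log (hlamcont i).continuousOn ?_
        intro x _; have := hlam1 i x; linarith
    exact h1.congr fun γ hγ => hg γ hγ
  ---- Part A : behaviour as γ → 0⁺
  set ε : ℝ := (K_P : ℝ) / (K_S * (gam 1 + 1)) with hεdef
  have hεpos : 0 < ε := div_pos hP (mul_pos hS (by linarith [hnn 1]))
  have hlam_small : ∀ γ ∈ Set.Ioo (0:ℝ) ε, ∀ i ∈ Finset.Icc 1 N, lam i γ = 1 := by
    intro γ hγ i hi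
    rw [Finset.mem_Icc] at hi
    rw [hlam]
    split
    · rename_i hir
      apply max_eq_right
      rw [div_le_one hP]
      have hgi : gam i ≤ gam 1 := hanti ⟨le_refl 1, by exact_mod_cast hN1⟩ ⟨hi.1, hi.2⟩ hi.1
      have h2 : γ * (K_S * (gam 1 + 1)) < K_P :=
        (lt_div_iff₀ (mul_pos hS (by linarith [hnn 1]))).mp hγ.2
      nlinarith [hγ.1, hnn i, hnn 1]
    · rfl
  have heq0 : ∀ γ ∈ Set.Ioo (0:ℝ) ε, g γ =
      ((N : ℝ) * K_P) * Real.log γ +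
        ((N : ℝ) * K * Real.log K - (K : ℝ) * ∑ i ∈ Finset.Icc 1 N,
          Real.log (γ * gam i + 1)) := by
    intro γ hγ
    have hγ0 : 0 < γ := hγ.1
    rw [hg γ hγ0]
    have hs1 : ∑ i ∈ Finset.Icc 1 N, Real.log (γ * K / (γ * gam i + lam i γ)) =
        ∑ i ∈ Finset.Icc 1 N, (Real.log γ + Real.log K - Real.log (γ * gam i + 1)) := by
      refine Finset.sum_congr rfl fun i hi => ?_
      rw [hlam_small γ hγ i hi]
      rw [Real.log_div (by positivity) (by have := hnn i; positivity),
        Real.log_mul hγ0.ne' hKr.ne']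
    have hs2 : ∑ i ∈ Finset.Icc 1 N, Real.log (lam i γ) = 0 :=
      Finset.sum_eq_zero fun i hi => by rw [hlam_small γ hγ i hi, Real.log_one]
    rw [hs1, hs2]
    simp only [Finset.sum_sub_distrib, Finset.sum_add_distrib, Finset.sum_const,
      Nat.card_Icc, Nat.add_sub_cancel, nsmul_eq_mul, mul_zero]
    rw [hK]
    push_cast
    ring
  have htend0 : Tendsto g (nhdsWithin 0 (Set.Ioi 0)) atBot := by
    have hmem : Set.Ioo (0:ℝ) ε ∈ nhdsWithin (0:ℝ) (Set.Ioi 0) :=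
      Ioo_mem_nhdsGT_of_mem ⟨le_refl 0, hεpos⟩
    have heq : (fun γ => ((N : ℝ) * K_P) * Real.log γ +
        ((N : ℝ) * K * Real.log K - (K : ℝ) * ∑ i ∈ Finset.Icc 1 N,
          Real.log (γ * gam i + 1))) =ᶠ[nhdsWithin (0:ℝ) (Set.Ioi 0)] g := by
      filter_upwards [hmem] with γ hγ
      exact (heq0 γ hγ).symm
    refine Tendsto.congr' heq ?_
    have hA : Tendsto (fun γ : ℝ => ((N : ℝ) * K_P) * Real.log γ)
        (nhdsWithin (0:ℝ) (Set.Ioi 0)) atBot :=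
      Real.tendsto_log_nhdsGT_zero.const_mul_atBot (by positivity)
    have hc : ContinuousAt (fun γ : ℝ => (N : ℝ) * K * Real.log K -
        (K : ℝ) * ∑ i ∈ Finset.Icc 1 N, Real.log (γ * gam i + 1)) 0 := by
      refine ContinuousAt.sub continuousAt_const (ContinuousAt.mul continuousAt_const ?_)
      refine tendsto_finset_sum _ fun i _ => ?_
      refine ContinuousAt.log ?_ (by norm_num)
      exact (continuousAt_id.mul continuousAt_const).add continuousAt_const
    have hB : Tendsto (fun γ : ℝ => (N : ℝ) * K * Real.log K -
        (K : ℝ) * ∑ i ∈ Finset.Icc 1 N, Real.log (γ * gam i + 1))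
        (nhdsWithin (0:ℝ) (Set.Ioi 0))
        (nhds ((N : ℝ) * K * Real.log K -
          (K : ℝ) * ∑ i ∈ Finset.Icc 1 N, Real.log ((0:ℝ) * gam i + 1))) :=
      hc.tendsto.mono_left nhdsWithin_le_nhds
    exact hA.atBot_add hB
  ---- Part B : behaviour as γ → ∞
  have hgr : 0 < gam r := hpos r hr hrKP.le
  set B : ℝ := (K_P : ℝ) / (K_S * gam r) with hBdef
  set c : ℝ := ((N : ℝ) - K_P) * K + (r : ℝ) * K_S - (N : ℝ) * K_S with hcdef
  set ψ : ℝ → ℝ := fun γ =>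
    (K : ℝ) * ∑ i ∈ Finset.Ioc 0 r, Real.log ((K_P : ℝ) / gam i) +
    (K_S : ℝ) * ∑ i ∈ Finset.Ioc 0 r, Real.log ((K_S : ℝ) * gam i / K_P) +
    (K : ℝ) * ∑ i ∈ Finset.Ioc r K_P, Real.log (γ * K / (γ * gam i + 1)) +
    ((N : ℝ) - K_P) * (K : ℝ) * Real.log K with hψdef
  have hcneg : c < 0 := by
    have : c = ((N : ℝ) - K_P) * K_P - ((K_P : ℝ) - r) * K_S := by
      rw [hcdef, hK]; push_cast; ring
    linarith
  have hgpos' : ∀ i ∈ Finset.Ioc 0 r, 0 < gam i := by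
    intro i hi; rw [Finset.mem_Ioc] at hi
    exact hpos i hi.1 (hi.2.trans hrKP.le)
  have hsplit : ∀ f : ℕ → ℝ, ∑ i ∈ Finset.Icc 1 N, f i =
      ∑ i ∈ Finset.Ioc 0 r, f i + ∑ i ∈ Finset.Ioc r K_P, f i +
        ∑ i ∈ Finset.Ioc K_P N, f i := by
    intro f
    rw [show (1:ℕ) = 0 + 1 from rfl, Finset.Icc_add_one_left_eq_Ioc,
      ← Finset.sum_Ioc_consecutive f (Nat.zero_le K_P) hKPN,
      ← Finset.sum_Ioc_consecutive f (Nat.zero_le r) hrKP.le]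
  have heq1 : ∀ γ : ℝ, max B 1 < γ → g γ = c * Real.log γ + ψ γ := by
    intro γ hγ
    have hγ1 : (1:ℝ) < γ := lt_of_le_of_lt (le_max_right B 1) hγ
    have hγ0 : 0 < γ := lt_trans one_pos hγ1
    have hγB : B < γ := lt_of_le_of_lt (le_max_left B 1) hγ
    have hbig : ∀ i, 1 ≤ i → i ≤ r → lam i γ = (K_S : ℝ) * γ * gam i / K_P := by
      intro i h1 h2
      rw [hlam, if_pos h2]
      apply max_eq_left
      rw [le_div_iff₀ hP, one_mul]
      have hgi : gam r ≤ gam i :=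
        hanti ⟨h1, by exact_mod_cast le_trans h2 (le_trans hrKP.le hKPN)⟩
          ⟨hr, le_trans hrKP.le hKPN⟩ h2
      have h3 : (K_P : ℝ) < γ * (K_S * gam r) :=
        (div_lt_iff₀ (mul_pos hS hgr)).mp hγB
      nlinarith
    rw [hg γ hγ0, hsplit, hsplit]
    have e1 : ∑ i ∈ Finset.Ioc 0 r, Real.log (γ * K / (γ * gam i + lam i γ)) =
        ∑ i ∈ Finset.Ioc 0 r, Real.log ((K_P : ℝ) / gam i) := by
      refine Finset.sum_congr rfl fun i hi => ?_
      rw [Finset.mem_Ioc] at hi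
      have hgi : 0 < gam i := hpos i hi.1 (hi.2.trans hrKP.le)
      rw [hbig i hi.1 hi.2]
      congr 1
      have hKPS : (K : ℝ) = (K_P : ℝ) + K_S := by rw [hK]; push_cast; ring
      field_simp
      rw [hKPS]
    have e2 : ∑ i ∈ Finset.Ioc r K_P, Real.log (γ * K / (γ * gam i + lam i γ)) =
        ∑ i ∈ Finset.Ioc r K_P, Real.log (γ * K / (γ * gam i + 1)) := by
      refine Finset.sum_congr rfl fun i hi => ?_
      rw [Finset.mem_Ioc] at hi
      rw [hlam, if_neg (by omega)]
    have e3 : ∑ i ∈ Finset.Ioc K_P N, Real.log (γ * K / (γ * gam i + lam i γ)) =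
        ((N : ℝ) - K_P) * (Real.log γ + Real.log K) := by
      have : ∀ i ∈ Finset.Ioc K_P N, Real.log (γ * K / (γ * gam i + lam i γ)) =
          Real.log γ + Real.log K := by
        intro i hi
        rw [Finset.mem_Ioc] at hi
        rw [hlam, if_neg (by omega), hzero i hi.1]
        rw [mul_zero, zero_add, div_one, Real.log_mul hγ0.ne' hKr.ne']
      rw [Finset.sum_congr rfl this, Finset.sum_const, Nat.card_Ioc, nsmul_eq_mul,
        Nat.cast_sub hKPN]
    have e4 : ∑ i ∈ Finset.Ioc 0 r, Real.log (lam i γ) =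
        ∑ i ∈ Finset.Ioc 0 r, Real.log ((K_S : ℝ) * gam i / K_P) + (r : ℝ) * Real.log γ := by
      have : ∀ i ∈ Finset.Ioc 0 r, Real.log (lam i γ) =
          Real.log ((K_S : ℝ) * gam i / K_P) + Real.log γ := by
        intro i hi
        rw [Finset.mem_Ioc] at hi
        have hgi : 0 < gam i := hpos i hi.1 (hi.2.trans hrKP.le)
        rw [hbig i hi.1 hi.2]
        rw [show (K_S : ℝ) * γ * gam i / K_P = ((K_S : ℝ) * gam i / K_P) * γ by ring,
          Real.log_mul (by positivity) hγ0.ne']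
      rw [Finset.sum_congr rfl this, Finset.sum_add_distrib, Finset.sum_const, Nat.card_Ioc,
        nsmul_eq_mul]
      simp
    have e5 : ∑ i ∈ Finset.Ioc r K_P, Real.log (lam i γ) = 0 :=
      Finset.sum_eq_zero fun i hi => by
        rw [Finset.mem_Ioc] at hi
        rw [hlam, if_neg (by omega), Real.log_one]
    have e6 : ∑ i ∈ Finset.Ioc K_P N, Real.log (lam i γ) = 0 :=
      Finset.sum_eq_zero fun i hi => by
        rw [Finset.mem_Ioc] at hi
        rw [hlam, if_neg (by omega), Real.log_one]
    rw [e1, e2, e3, e4, e5, e6, hψdef, hcdef]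
    rw [hK]
    push_cast
    ring
  have htendTop : Tendsto g atTop atBot := by
    have hψt : Tendsto ψ atTop (nhds
        ((K : ℝ) * ∑ i ∈ Finset.Ioc 0 r, Real.log ((K_P : ℝ) / gam i) +
        (K_S : ℝ) * ∑ i ∈ Finset.Ioc 0 r, Real.log ((K_S : ℝ) * gam i / K_P) +
        (K : ℝ) * ∑ i ∈ Finset.Ioc r K_P, Real.log ((K : ℝ) / gam i) +
        ((N : ℝ) - K_P) * (K : ℝ) * Real.log K)) := by
      rw [hψdef]
      refine Tendsto.add (Tendsto.add (Tendsto.add tendsto_const_nhds ?_) ?_) tendsto_const_nhds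
      · exact tendsto_const_nhds
      · refine Tendsto.const_mul _ (tendsto_finset_sum _ fun i hi => ?_)
        rw [Finset.mem_Ioc] at hi
        have hgi : 0 < gam i := hpos i (by omega) hi.2
        have h1 : Tendsto (fun γ : ℝ => (K : ℝ) / (gam i + γ⁻¹)) atTop
            (nhds ((K : ℝ) / (gam i + 0))) :=
          tendsto_const_nhds.div (tendsto_const_nhds.add tendsto_inv_atTop_zero)
            (by rw [add_zero]; exact hgi.ne')
        have h2 : (fun γ : ℝ => γ * K / (γ * gam i + 1)) =ᶠ[atTop]
            fun γ : ℝ => (K : ℝ) / (gam i + γ⁻¹) := by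
          filter_upwards [eventually_gt_atTop (0:ℝ)] with γ hγ
          field_simp
        have h3 : Tendsto (fun γ : ℝ => γ * K / (γ * gam i + 1)) atTop
            (nhds ((K : ℝ) / gam i)) := by
          rw [show (K : ℝ) / gam i = (K : ℝ) / (gam i + 0) by rw [add_zero]]
          exact Tendsto.congr' h2.symm h1
        exact h3.log (by rw [add_zero] at *; positivity)
    have hct : Tendsto (fun γ : ℝ => c * Real.log γ) atTop atBot :=
      Real.tendsto_log_atTop.const_mul_atTop_of_neg hcneg
    have heq : (fun γ : ℝ => c * Real.log γ + ψ γ) =ᶠ[atTop] g := by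
      filter_upwards [eventually_gt_atTop (max B 1)] with γ hγ
      exact (heq1 γ hγ).symm
    exact Tendsto.congr' heq (hct.atBot_add hψt)
  refine ⟨htend0, htendTop, ?_⟩
  ---- Part C : existence of the maximizer
  have h0' : {x : ℝ | g x ≤ g 1} ∈ nhdsWithin (0:ℝ) (Set.Ioi 0) :=
    htend0.eventually (eventually_le_atBot (g 1))
  obtain ⟨u, hu, hsub⟩ := mem_nhdsGT_iff_exists_Ioo_subset.mp h0'
  have hu0 : (0:ℝ) < u := hu
  obtain ⟨b, hb⟩ := eventually_atTop.mp (htendTop.eventually (eventually_le_atBot (g 1)))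
  set lo : ℝ := min (u / 2) 1 with hlodef
  set hi : ℝ := max b 1 with hhidef
  have hlo : 0 < lo := lt_min (by linarith) one_pos
  have h1mem : (1:ℝ) ∈ Set.Icc lo hi := ⟨min_le_right _ _, le_max_right _ _⟩
  have hsubI : Set.Icc lo hi ⊆ Set.Ioi (0:ℝ) := fun x hx => lt_of_lt_of_le hlo hx.1
  obtain ⟨γ₀, hγ₀mem, hmax⟩ :=
    isCompact_Icc.exists_isMaxOn ⟨1, h1mem⟩ (hgc.mono hsubI)
  refine ⟨γ₀, lt_of_lt_of_le hlo hγ₀mem.1, ?_⟩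
  intro γ hγ
  by_cases hcase : γ ∈ Set.Icc lo hi
  · exact hmax hcase
  · have hg1 : g 1 ≤ g γ₀ := hmax h1mem
    rw [Set.mem_Icc, not_and_or] at hcase
    rcases hcase with h | h
    · push_neg at h
      have hγu : γ ∈ Set.Ioo (0:ℝ) u := by
        refine ⟨hγ, ?_⟩
        have : γ < u / 2 := lt_of_lt_of_le h (min_le_left _ _)
        linarith
      exact le_trans (hsub hγu) hg1
    · push_neg at h
      have : b ≤ γ := le_trans (le_max_left b 1) h.le
      exact le_trans (hb γ this) hg1
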